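/- The infimum of the linear functional Ing over the almost entropic points x ∈ Γ̄*_4 satisfying x_{ABCD} = 1 equals the infimum of Ing over the almost entropic points that in addition satisfy the eight symmetry equalities x_A = x_B, x_{AC} = x_{BC}, x_{AD} = x_{BD}, x_{ACD} = x_{BCD}, x_C = x_D, x_{AC} = x_{AD}, x_{BC} = x_{BD}, x_{ABC} = x_{ABD}. -/

import Mathlib

open scoped Classical

/-- Shannon entropy (natural-log base) of a random variable `X` defined on a finite
probability space `(Ω, p)` and taking values in a finite type `α`. -/
noncomputable def ent {Ω α : Type*} [Fintype Ω] [Fintype α] (p : Ω → ℝ) (X : Ω → α) : ℝ :=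
  ∑ a : α, Real.negMulLog (∑ ω : Ω, if X ω = a then p ω else 0)

/-- Index set for the coordinates of `V_n = ℝ^{2^n − 1}`: the nonempty subsets of `[n]`. -/
abbrev EIndex (n : ℕ) := { V : Finset (Fin n) // V.Nonempty }

/-- A point `x ∈ ℝ^{2^n−1}` is entropic if it is the entropy profile of some tuple
`(X_1,…,X_n)` of jointly distributed random variables taking finitely many values:
`x_V = H(X_V)` for every nonempty `V ⊆ [n]`. -/
def IsEntropic {n : ℕ} (x : EIndex n → ℝ) : Prop :=
  ∃ (m k : ℕ) (p : Fin m → ℝ),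
    (∀ ω, 0 ≤ p ω) ∧ (∑ ω, p ω = 1) ∧
    ∃ X : Fin n → Fin m → Fin k,
      ∀ V : EIndex n, x V = ent p (fun ω => fun i : V.1 => X i ω)

/-- The Ingleton quantity `I(A;B|C) + I(A;B|D) + I(C;D) − I(A;B)` evaluated as a linear
combination of the coordinates of a point `x ∈ ℝ^{15}`, where the four indices
`A, B, C, D` are `0, 1, 2, 3 : Fin 4`. -/
noncomputable def Ing4 (x : EIndex 4 → ℝ) : ℝ :=
  (x ⟨{0, 2}, by decide⟩ + x ⟨{1, 2}, by decide⟩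
      - x ⟨{0, 1, 2}, by decide⟩ - x ⟨{2}, by decide⟩)
    + (x ⟨{0, 3}, by decide⟩ + x ⟨{1, 3}, by decide⟩
      - x ⟨{0, 1, 3}, by decide⟩ - x ⟨{3}, by decide⟩)
    + (x ⟨{2}, by decide⟩ + x ⟨{3}, by decide⟩ - x ⟨{2, 3}, by decide⟩)
    - (x ⟨{0}, by decide⟩ + x ⟨{1}, by decide⟩ - x ⟨{0, 1}, by decide⟩)

lemma ent_congr_inst {Ω α : Type*} [Fintype Ω] (i1 i2 : Fintype α) (p : Ω → ℝ) (X : Ω → α) :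
    @ent Ω α _ i1 p X = @ent Ω α _ i2 p X := by
  cases Subsingleton.elim i1 i2; rfl

lemma ent_comp_injective {Ω α β : Type*} [Fintype Ω] [Fintype α] [Fintype β]
    (p : Ω → ℝ) (X : Ω → α) (g : α → β) (hg : Function.Injective g) :
    ent p (fun ω => g (X ω)) = ent p X := by
  unfold ent
  have h0 : ∀ b ∈ Finset.univ, b ∉ Finset.univ.image g →
      Real.negMulLog (∑ ω : Ω, if g (X ω) = b then p ω else 0) = 0 := by
    intro b _ hb
    have : (∑ ω : Ω, if g (X ω) = b then p ω else 0) = 0 := by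
      apply Finset.sum_eq_zero
      intro ω _
      have : g (X ω) ≠ b := fun h => hb (Finset.mem_image.2 ⟨X ω, Finset.mem_univ _, h⟩)
      simp [this]
    rw [this, Real.negMulLog_zero]
  rw [← Finset.sum_subset (Finset.subset_univ (Finset.univ.image g)) h0,
    Finset.sum_image (fun a _ b _ h => hg h)]
  apply Finset.sum_congr rfl
  intro a _
  congr 1
  apply Finset.sum_congr rfl
  intro ω _
  simp [hg.eq_iff]

lemma ent_comp_equiv_dom {Ω Ω' α : Type*} [Fintype Ω] [Fintype Ω'] [Fintype α]
    (p : Ω → ℝ) (X : Ω → α) (e : Ω' ≃ Ω) :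
    ent (fun ω' => p (e ω')) (fun ω' => X (e ω')) = ent p X := by
  unfold ent
  apply Finset.sum_congr rfl
  intro a _
  congr 1
  exact e.sum_comp (fun ω => if X ω = a then p ω else 0)

/-- total mass of the pushforward is the total mass -/
lemma ent_total {Ω α : Type*} [Fintype Ω] [Fintype α] (p : Ω → ℝ) (X : Ω → α) :
    ∑ a : α, (∑ ω : Ω, if X ω = a then p ω else 0) = ∑ ω : Ω, p ω := by
  rw [Finset.sum_comm]
  apply Finset.sum_congr rfl
  intro ω _
  exact Finset.sum_ite_eq Finset.univ (X ω) (fun _ => p ω) |>.trans (by simp)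

/-- introduce entropic points from arbitrary fintype witnesses -/
lemma isEntropic_intro {n : ℕ} (x : EIndex n → ℝ) (Ω α : Type) [Fintype Ω] [Fintype α]
    (p : Ω → ℝ) (hp : ∀ ω, 0 ≤ p ω) (hs : ∑ ω, p ω = 1)
    (X : Fin n → Ω → α)
    (hx : ∀ V : EIndex n, x V = ent p (fun ω => fun i : V.1 => X i ω)) :
    IsEntropic x := by
  refine ⟨Fintype.card Ω, Fintype.card α, ?_⟩
  set e := (Fintype.equivFin Ω).symm
  set g := Fintype.equivFin α
  refine ⟨fun ω => p (e ω), fun ω => hp _, ?_, fun i ω => g (X i (e ω)), ?_⟩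
  · rw [e.sum_comp p]; exact hs
  · intro V
    rw [hx V]
    have step1 : ent (fun ω' => p (e ω')) (fun ω' => fun i : V.1 => g (X i (e ω'))) =
        ent (fun ω' => p (e ω')) (fun ω' => fun i : V.1 => X i (e ω')) := by
      exact ent_comp_injective (fun ω' => p (e ω')) (fun ω' => fun i : V.1 => X i (e ω'))
        (fun f (i : V.1) => g (f i))
        (fun f f' h => funext fun i => g.injective (congrFun h i))
    rw [step1]
    exact (ent_comp_equiv_dom p (fun ω => fun i : V.1 => X i ω) e).symm

set_option maxHeartbeats 1000000

lemma isEntropic_zero {n : ℕ} : IsEntropic (fun _ : EIndex n => (0:ℝ)) := by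
  apply isEntropic_intro _ Unit Unit (fun _ => 1) (fun _ => zero_le_one) (by simp)
    (fun _ _ => ())
  intro V
  unfold ent
  rw [Fintype.sum_unique, Fintype.sum_unique, if_pos rfl, Real.negMulLog_one]

noncomputable def pmass {Ω α : Type*} [Fintype Ω] (p : Ω → ℝ) (X : Ω → α) (a : α) : ℝ :=
  ∑ ω : Ω, if X ω = a then p ω else 0

lemma ent_eq {Ω α : Type*} [Fintype Ω] [Fintype α] (p : Ω → ℝ) (X : Ω → α) :
    ent p X = ∑ a : α, Real.negMulLog (pmass p X a) := rfl

lemma pmass_total {Ω α : Type*} [Fintype Ω] [Fintype α] (p : Ω → ℝ) (X : Ω → α) :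
    ∑ a : α, pmass p X a = ∑ ω : Ω, p ω := ent_total p X

lemma ent_pair {Ω₁ Ω₂ γ₁ γ₂ : Type*} [Fintype Ω₁] [Fintype Ω₂] [Fintype γ₁] [Fintype γ₂]
    (p₁ : Ω₁ → ℝ) (p₂ : Ω₂ → ℝ) (A : Ω₁ → γ₁) (B : Ω₂ → γ₂)
    (h1 : ∑ ω, p₁ ω = 1) (h2 : ∑ ω, p₂ ω = 1) :
    ent (fun ω : Ω₁ × Ω₂ => p₁ ω.1 * p₂ ω.2) (fun ω => (A ω.1, B ω.2))
      = ent p₁ A + ent p₂ B := by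
  have hmass : ∀ (c : γ₁ × γ₂),
      pmass (fun ω : Ω₁ × Ω₂ => p₁ ω.1 * p₂ ω.2) (fun ω => (A ω.1, B ω.2)) c
        = pmass p₁ A c.1 * pmass p₂ B c.2 := by
    intro c
    unfold pmass
    rw [← Finset.univ_product_univ, Finset.sum_product]
    refine Eq.trans ?_ (Finset.sum_mul_sum Finset.univ Finset.univ
      (fun ω => if A ω = c.1 then p₁ ω else 0) (fun ω => if B ω = c.2 then p₂ ω else 0)).symm
    apply Finset.sum_congr rfl; intro ω₁ _
    apply Finset.sum_congr rfl; intro ω₂ _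
    by_cases e1 : A ω₁ = c.1 <;> by_cases e2 : B ω₂ = c.2 <;>
      simp [Prod.ext_iff, e1, e2]
  rw [ent_eq, ent_eq, ent_eq]
  calc (∑ c : γ₁ × γ₂,
          Real.negMulLog (pmass (fun ω : Ω₁ × Ω₂ => p₁ ω.1 * p₂ ω.2) (fun ω => (A ω.1, B ω.2)) c))
      = ∑ c : γ₁ × γ₂, (pmass p₂ B c.2 * Real.negMulLog (pmass p₁ A c.1)
          + pmass p₁ A c.1 * Real.negMulLog (pmass p₂ B c.2)) := by
        apply Finset.sum_congr rfl; intro c _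
        rw [hmass c, Real.negMulLog_mul]
    _ = ∑ a : γ₁, ∑ b : γ₂, (pmass p₂ B b * Real.negMulLog (pmass p₁ A a)
          + pmass p₁ A a * Real.negMulLog (pmass p₂ B b)) := by
        rw [← Finset.univ_product_univ, Finset.sum_product]
    _ = ∑ a : γ₁, ((∑ b : γ₂, pmass p₂ B b) * Real.negMulLog (pmass p₁ A a)
          + pmass p₁ A a * (∑ b : γ₂, Real.negMulLog (pmass p₂ B b))) := by
        apply Finset.sum_congr rfl; intro a _
        rw [Finset.sum_add_distrib, ← Finset.sum_mul, ← Finset.mul_sum]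
    _ = ∑ a : γ₁, (Real.negMulLog (pmass p₁ A a)
          + pmass p₁ A a * (∑ b : γ₂, Real.negMulLog (pmass p₂ B b))) := by
        apply Finset.sum_congr rfl; intro a _
        rw [pmass_total p₂ B, h2, one_mul]
    _ = (∑ a : γ₁, Real.negMulLog (pmass p₁ A a))
          + (∑ a : γ₁, pmass p₁ A a) * (∑ b : γ₂, Real.negMulLog (pmass p₂ B b)) := by
        rw [Finset.sum_add_distrib, ← Finset.sum_mul]
    _ = _ := by rw [pmass_total p₁ A, h1, one_mul]

lemma isEntropic_add {n : ℕ} {x y : EIndex n → ℝ}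
    (hx : IsEntropic x) (hy : IsEntropic y) : IsEntropic (x + y) := by
  obtain ⟨m₁, k₁, p₁, hp₁, hs₁, X₁, hX₁⟩ := hx
  obtain ⟨m₂, k₂, p₂, hp₂, hs₂, X₂, hX₂⟩ := hy
  apply isEntropic_intro _ (Fin m₁ × Fin m₂) (Fin k₁ × Fin k₂)
    (fun ω => p₁ ω.1 * p₂ ω.2)
    (fun ω => mul_nonneg (hp₁ _) (hp₂ _))
    (by rw [← Finset.univ_product_univ, Finset.sum_product,
          ← Finset.sum_mul_sum Finset.univ Finset.univ p₁ p₂, hs₁, hs₂, one_mul])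
    (fun i ω => (X₁ i ω.1, X₂ i ω.2))
  intro V
  have inj : Function.Injective
      (fun (q : (V.1 → Fin k₁) × (V.1 → Fin k₂)) => (fun i : V.1 => (q.1 i, q.2 i))) := by
    intro q q' h
    have h' := congrFun h
    exact Prod.ext (funext fun i => (Prod.ext_iff.1 (h' i)).1)
      (funext fun i => (Prod.ext_iff.1 (h' i)).2)
  have step := ent_comp_injective (fun ω : Fin m₁ × Fin m₂ => p₁ ω.1 * p₂ ω.2)
      (fun ω => ((fun i : V.1 => X₁ i ω.1), (fun i : V.1 => X₂ i ω.2)))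
      (fun (q : (V.1 → Fin k₁) × (V.1 → Fin k₂)) => (fun i : V.1 => (q.1 i, q.2 i))) inj
  have pair := ent_pair p₁ p₂ (fun ω => fun i : V.1 => X₁ i ω) (fun ω => fun i : V.1 => X₂ i ω)
      hs₁ hs₂
  rw [Pi.add_apply, hX₁ V, hX₂ V]
  exact (step.trans pair).symm

noncomputable def pterm {Ω α : Type*} (p : Ω → ℝ) (X : Ω → α) (a : α) (ω : Ω) : ℝ :=
  if X ω = a then p ω else 0

lemma pmass_eq_sum_pterm {Ω α : Type*} [Fintype Ω] (p : Ω → ℝ) (X : Ω → α) (a : α) :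
    pmass p X a = ∑ ω : Ω, pterm p X a ω := rfl

lemma ent_erasure {Ω β ι : Type*} [Fintype Ω] [Fintype β] [Fintype ι] [Nonempty ι]
    (p : Ω → ℝ) (hs : ∑ ω, p ω = 1) (R : Ω → ι → β) (lam : ℝ) :
    ent (fun ω : Ω × Bool => if ω.2 then lam * p ω.1 else (1 - lam) * p ω.1)
      (fun ω => fun i : ι => if ω.2 then some (R ω.1 i) else (none : Option β))
    = lam * ent p R + (Real.negMulLog lam + Real.negMulLog (1 - lam)) := by
  obtain ⟨i₀⟩ := ‹Nonempty ι›
  set q : Ω × Bool → ℝ := fun ω => if ω.2 then lam * p ω.1 else (1 - lam) * p ω.1 with hq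
  set Y : Ω × Bool → ι → Option β :=
    fun ω => fun i => if ω.2 then some (R ω.1 i) else none with hY
  set cnone : ι → Option β := fun _ => none with hcnone
  set em : (ι → β) → (ι → Option β) := fun g i => some (g i) with hem
  have em_inj : Function.Injective em := by
    intro g g' h
    funext i
    have := congrFun h i
    simpa [hem] using this
  have M1 : pmass q Y cnone = 1 - lam := by
    have key : ∀ ω : Ω, (∑ b : Bool, pterm q Y cnone (ω, b)) = (1 - lam) * p ω := by
      intro ω
      rw [Fintype.sum_bool]
      have ht : Y (ω, true) ≠ cnone := by
        intro h
        have := congrFun h i₀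
        simp [hY, hcnone] at this
      have hf : Y (ω, false) = cnone := by funext i; simp [hY, hcnone]
      unfold pterm
      rw [if_neg ht, if_pos hf]
      simp [hq]
    calc pmass q Y cnone = ∑ ω : Ω × Bool, pterm q Y cnone ω := rfl
      _ = ∑ x : Ω, ∑ y : Bool, pterm q Y cnone (x, y) := by
          rw [← Finset.univ_product_univ, Finset.sum_product]
      _ = ∑ x : Ω, (1 - lam) * p x := Finset.sum_congr rfl (fun ω _ => key ω)
      _ = 1 - lam := by rw [← Finset.mul_sum, hs, mul_one]
  have M2 : ∀ g : ι → β, pmass q Y (em g) = lam * pmass p R g := by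
    intro g
    have key : ∀ ω : Ω, (∑ b : Bool, pterm q Y (em g) (ω, b)) = lam * pterm p R g ω := by
      intro ω
      rw [Fintype.sum_bool]
      have hf : Y (ω, false) ≠ em g := by
        intro h
        have := congrFun h i₀
        simp [hY, hem] at this
      have ht : (Y (ω, true) = em g) ↔ R ω = g := by
        constructor
        · intro h; funext i; have := congrFun h i; simpa [hY, hem] using this
        · intro h; funext i; simp [hY, hem, h]
      unfold pterm
      rw [if_neg hf]
      by_cases h : R ω = g
      · rw [if_pos (ht.2 h), if_pos h]; simp [hq]
      · rw [if_neg (fun hh => h (ht.1 hh)), if_neg h, mul_zero, add_zero]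
    calc pmass q Y (em g) = ∑ ω : Ω × Bool, pterm q Y (em g) ω := rfl
      _ = ∑ x : Ω, ∑ y : Bool, pterm q Y (em g) (x, y) := by
          rw [← Finset.univ_product_univ, Finset.sum_product]
      _ = ∑ x : Ω, lam * pterm p R g x := Finset.sum_congr rfl (fun ω _ => key ω)
      _ = lam * pmass p R g := by rw [← Finset.mul_sum]; rfl
  have M3 : ∀ f : ι → Option β, f ∉ insert cnone (Finset.univ.image em) → pmass q Y f = 0 := by
    intro f hf
    rw [Finset.mem_insert] at hf
    push_neg at hf
    obtain ⟨hf1, hf2⟩ := hf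
    have hnone : ∃ i, f i = none := by
      by_contra h
      push_neg at h
      have hall : ∀ i, (f i).isSome := fun i => Option.ne_none_iff_isSome.1 (h i)
      exact hf2 (Finset.mem_image.2 ⟨fun i => (f i).get (hall i), Finset.mem_univ _,
        funext fun i => by simp [hem]⟩)
    obtain ⟨i₁, hi₁⟩ := hnone
    have hsome : ∃ i, f i ≠ none := by
      by_contra h
      push_neg at h
      exact hf1 (funext fun i => h i)
    obtain ⟨i₂, hi₂⟩ := hsome
    rw [pmass_eq_sum_pterm]
    apply Finset.sum_eq_zero
    intro ω _
    have hne : Y ω ≠ f := by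
      intro h
      by_cases hb : ω.2
      · have h1 := congrFun h i₁
        rw [hi₁] at h1
        simp [hY, hb] at h1
      · have h2 := congrFun h i₂
        have : (none : Option β) = f i₂ := by simpa [hY, hb] using h2
        exact hi₂ this.symm
    exact if_neg hne
  have hnotmem : cnone ∉ Finset.univ.image em := by
    intro h
    obtain ⟨g, _, hg⟩ := Finset.mem_image.1 h
    have := congrFun hg i₀
    simp [hem, hcnone] at this
  rw [ent_eq]
  rw [← Finset.sum_subset (Finset.subset_univ (insert cnone (Finset.univ.image em)))
    (fun f _ hf => by rw [M3 f hf, Real.negMulLog_zero])]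
  rw [Finset.sum_insert hnotmem, Finset.sum_image (fun a _ b _ h => em_inj h), M1]
  have key2 : ∀ g : ι → β, Real.negMulLog (pmass q Y (em g))
      = pmass p R g * Real.negMulLog lam + lam * Real.negMulLog (pmass p R g) := by
    intro g; rw [M2 g, Real.negMulLog_mul]
  rw [Finset.sum_congr rfl (fun g _ => key2 g), Finset.sum_add_distrib,
    ← Finset.sum_mul, ← Finset.mul_sum, pmass_total p R, hs, one_mul, ent_eq]
  ring

lemma isEntropic_erasure {n : ℕ} {x : EIndex n → ℝ} (hx : IsEntropic x) (lam : ℝ)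
    (h0 : 0 ≤ lam) (h1 : lam ≤ 1) :
    IsEntropic (fun V => lam * x V + (Real.negMulLog lam + Real.negMulLog (1 - lam))) := by
  obtain ⟨m, k, p, hp, hs, X, hX⟩ := hx
  apply isEntropic_intro _ (Fin m × Bool) (Option (Fin k))
    (fun ω => if ω.2 then lam * p ω.1 else (1 - lam) * p ω.1)
    (fun ω => by
      by_cases hb : ω.2
      · rw [if_pos hb]; exact mul_nonneg h0 (hp _)
      · rw [if_neg hb]; exact mul_nonneg (by linarith) (hp _))
    (by
      rw [← Finset.univ_product_univ, Finset.sum_product]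
      have : ∀ ω : Fin m, (∑ b : Bool, if b then lam * p ω else (1 - lam) * p ω) = p ω := by
        intro ω; rw [Fintype.sum_bool, if_pos rfl, if_neg Bool.false_ne_true]; ring
      calc (∑ x : Fin m, ∑ y : Bool, if (x, y).2 then lam * p (x, y).1 else (1 - lam) * p (x, y).1)
          = ∑ ω : Fin m, p ω := Finset.sum_congr rfl (fun ω _ => this ω)
        _ = 1 := hs)
    (fun i ω => if ω.2 then some (X i ω.1) else none)
  intro V
  have : Nonempty V.1 := ⟨⟨V.2.choose, V.2.choose_spec⟩⟩
  rw [hX V]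
  have key := (ent_erasure p hs (fun ω => fun i : V.1 => X i ω) lam).symm
  convert key using 3
  exact ent_congr_inst _ _ _ _

lemma isEntropic_perm {n : ℕ} (σ : Fin n → Fin n) {x : EIndex n → ℝ} (hx : IsEntropic x) :
    IsEntropic (fun V : EIndex n => x ⟨V.1.image σ, V.2.image σ⟩) := by
  obtain ⟨m, k, p, hp, hs, X, hX⟩ := hx
  apply isEntropic_intro _ (Fin m) (Fin k) p hp hs (fun i ω => X (σ i) ω)
  intro V
  rw [hX ⟨V.1.image σ, V.2.image σ⟩]
  have ginj : Function.Injective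
      (fun (f : (V.1.image σ : Finset (Fin n)) → Fin k) =>
        (fun i : V.1 => f ⟨σ i.1, Finset.mem_image_of_mem σ i.2⟩)) := by
    intro f f' h
    funext j
    obtain ⟨i, hiV, hσ⟩ := Finset.mem_image.1 j.2
    have hj : j = ⟨σ i, Finset.mem_image_of_mem σ hiV⟩ := Subtype.ext hσ.symm
    rw [hj]
    exact congrFun h ⟨i, hiV⟩
  exact (ent_comp_injective p
    (fun ω => (fun j : (V.1.image σ : Finset (Fin n)) => X j ω)) _ ginj).symm

def sig1 : Fin 4 → Fin 4 := ![1, 0, 2, 3]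
def sig2 : Fin 4 → Fin 4 := ![0, 1, 3, 2]
def sig3 : Fin 4 → Fin 4 := ![1, 0, 3, 2]

lemma mem_cl_add {n : ℕ} {a b : EIndex n → ℝ}
    (ha : a ∈ closure {y : EIndex n → ℝ | IsEntropic y})
    (hb : b ∈ closure {y : EIndex n → ℝ | IsEntropic y}) :
    a + b ∈ closure {y : EIndex n → ℝ | IsEntropic y} :=
  map_mem_closure₂ continuous_add ha hb (fun _ hx _ hy => isEntropic_add hx hy)

lemma mem_cl_mul {n : ℕ} (M : ℕ) {a : EIndex n → ℝ}
    (ha : a ∈ closure {y : EIndex n → ℝ | IsEntropic y}) :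
    (fun V => ((M : ℝ) + 1) * a V) ∈ closure {y : EIndex n → ℝ | IsEntropic y} := by
  induction M with
  | zero =>
      rw [show (fun V => (((0:ℕ) : ℝ) + 1) * a V) = a from funext fun V => by norm_num]
      exact ha
  | succ M ih =>
      rw [show (fun V => (((M+1:ℕ) : ℝ) + 1) * a V) = a + fun V => ((M : ℝ) + 1) * a V from
        funext fun V => by push_cast [Pi.add_apply]; ring]
      exact mem_cl_add ha ih

lemma mem_cl_erasure {n : ℕ} (lam : ℝ) (h0 : 0 ≤ lam) (h1 : lam ≤ 1) {a : EIndex n → ℝ}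
    (ha : a ∈ closure {y : EIndex n → ℝ | IsEntropic y}) :
    (fun V => lam * a V + (Real.negMulLog lam + Real.negMulLog (1 - lam)))
      ∈ closure {y : EIndex n → ℝ | IsEntropic y} := by
  have hcont : Continuous (fun (z : EIndex n → ℝ) =>
      fun V => lam * z V + (Real.negMulLog lam + Real.negMulLog (1 - lam))) :=
    continuous_pi fun V => (continuous_const.mul (continuous_apply V)).add continuous_const
  exact map_mem_closure hcont ha (fun y hy => isEntropic_erasure hy lam h0 h1)

lemma mem_cl_perm {n : ℕ} (σ : Fin n → Fin n) {a : EIndex n → ℝ}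
    (ha : a ∈ closure {y : EIndex n → ℝ | IsEntropic y}) :
    (fun V : EIndex n => a ⟨V.1.image σ, V.2.image σ⟩)
      ∈ closure {y : EIndex n → ℝ | IsEntropic y} := by
  have hcont : Continuous (fun (z : EIndex n → ℝ) =>
      fun V : EIndex n => z ⟨V.1.image σ, V.2.image σ⟩) :=
    continuous_pi fun V => continuous_apply _
  exact map_mem_closure hcont ha (fun y hy => isEntropic_perm σ hy)

lemma exists_lam {c : ℝ} (hc : 2 ≤ c) :
    ∃ lam : ℝ, 0 < lam ∧ lam ≤ 1/c ∧
      c * lam + (Real.negMulLog lam + Real.negMulLog (1 - lam)) = 1 := by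
  set f : ℝ → ℝ := fun t => c * t + (Real.negMulLog t + Real.negMulLog (1 - t)) with hf
  have hcont : Continuous f := by
    apply (continuous_const.mul continuous_id).add
    exact Real.continuous_negMulLog.add
      (Real.continuous_negMulLog.comp (continuous_const.sub continuous_id))
  have hc0 : (0:ℝ) < c := by linarith
  have h01 : (0:ℝ) ≤ 1/c := by positivity
  have hf0 : f 0 = 0 := by simp [hf]
  have hf1 : 1 ≤ f (1/c) := by
    have h1 : c * (1/c) = 1 := by field_simp
    have e1 : 0 ≤ Real.negMulLog (1/c) :=
      Real.negMulLog_nonneg (by positivity) (by rw [div_le_one hc0]; linarith)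
    have e2 : 0 ≤ Real.negMulLog (1 - 1/c) := by
      apply Real.negMulLog_nonneg
      · have : 1/c ≤ 1 := by rw [div_le_one hc0]; linarith
        linarith
      · linarith
    simp only [hf]
    linarith
  obtain ⟨lam, hmem, hlam⟩ := intermediate_value_Icc h01 hcont.continuousOn
    (Set.mem_Icc.2 ⟨by rw [hf0]; norm_num, hf1⟩)
  refine ⟨lam, ?_, hmem.2, hlam⟩
  rcases eq_or_lt_of_le hmem.1 with h | h
  · exfalso
    rw [← h] at hlam
    rw [hf0] at hlam
    norm_num at hlam
  · exact h

lemma h2_le {lam : ℝ} (h0 : 0 < lam) (h16 : lam ≤ 1/16) :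
    Real.negMulLog lam + Real.negMulLog (1 - lam) ≤ 9/16 := by
  have hs : Real.sqrt lam ≤ 1/4 := by
    rw [show (1:ℝ)/4 = Real.sqrt (1/16) from by
      rw [show (1:ℝ)/16 = (1/4)^2 by norm_num, Real.sqrt_sq (by norm_num : (0:ℝ) ≤ 1/4)]]
    exact Real.sqrt_le_sqrt h16
  have hsp : 0 < Real.sqrt lam := Real.sqrt_pos.2 h0
  have b1 : Real.negMulLog lam ≤ 1/2 := by
    have hlog : Real.log lam = 2 * Real.log (Real.sqrt lam) := by
      rw [Real.log_sqrt h0.le]; ring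
    have h1 : Real.log (Real.sqrt lam)⁻¹ ≤ (Real.sqrt lam)⁻¹ - 1 :=
      Real.log_le_sub_one_of_pos (by positivity)
    have hinv : Real.log (Real.sqrt lam)⁻¹ = - Real.log (Real.sqrt lam) := Real.log_inv _
    have key : -Real.log (Real.sqrt lam) ≤ (Real.sqrt lam)⁻¹ := by
      rw [← hinv]; linarith
    rw [Real.negMulLog_def]
    calc -lam * Real.log lam = 2 * lam * (-Real.log (Real.sqrt lam)) := by rw [hlog]; ring
      _ ≤ 2 * lam * (Real.sqrt lam)⁻¹ :=
          mul_le_mul_of_nonneg_left key (by positivity)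
      _ = 2 * Real.sqrt lam := by
          rw [mul_assoc, ← div_eq_mul_inv, Real.div_sqrt]
      _ ≤ 2 * (1/4) := by linarith
      _ = 1/2 := by norm_num
  have b2 : Real.negMulLog (1 - lam) ≤ lam := by
    have hpos : (0:ℝ) < 1 - lam := by linarith
    have h1 : Real.log (1 - lam)⁻¹ ≤ (1 - lam)⁻¹ - 1 :=
      Real.log_le_sub_one_of_pos (by positivity)
    have hinv : Real.log (1 - lam)⁻¹ = - Real.log (1 - lam) := Real.log_inv _
    have key : -Real.log (1 - lam) ≤ (1 - lam)⁻¹ - 1 := by rw [← hinv]; exact h1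
    rw [Real.negMulLog_def]
    calc -(1 - lam) * Real.log (1 - lam) = (1 - lam) * (-Real.log (1 - lam)) := by ring
      _ ≤ (1 - lam) * ((1 - lam)⁻¹ - 1) := mul_le_mul_of_nonneg_left key hpos.le
      _ = 1 - (1 - lam) := by field_simp
      _ = lam := by ring
  linarith
lemma img1_0 : Finset.image sig1 ({0, 1, 2, 3} : Finset (Fin 4)) = {0, 1, 2, 3} := by decide
lemma img1_1 : Finset.image sig1 ({0} : Finset (Fin 4)) = {1} := by decide
lemma img1_2 : Finset.image sig1 ({1} : Finset (Fin 4)) = {0} := by decide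
lemma img1_3 : Finset.image sig1 ({2} : Finset (Fin 4)) = {2} := by decide
lemma img1_4 : Finset.image sig1 ({3} : Finset (Fin 4)) = {3} := by decide
lemma img1_5 : Finset.image sig1 ({0, 1} : Finset (Fin 4)) = {0, 1} := by decide
lemma img1_6 : Finset.image sig1 ({2, 3} : Finset (Fin 4)) = {2, 3} := by decide
lemma img1_7 : Finset.image sig1 ({0, 2} : Finset (Fin 4)) = {1, 2} := by decide
lemma img1_8 : Finset.image sig1 ({1, 2} : Finset (Fin 4)) = {0, 2} := by decide
lemma img1_9 : Finset.image sig1 ({0, 3} : Finset (Fin 4)) = {1, 3} := by decide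
lemma img1_10 : Finset.image sig1 ({1, 3} : Finset (Fin 4)) = {0, 3} := by decide
lemma img1_11 : Finset.image sig1 ({0, 1, 2} : Finset (Fin 4)) = {0, 1, 2} := by decide
lemma img1_12 : Finset.image sig1 ({0, 1, 3} : Finset (Fin 4)) = {0, 1, 3} := by decide
lemma img1_13 : Finset.image sig1 ({0, 2, 3} : Finset (Fin 4)) = {1, 2, 3} := by decide
lemma img1_14 : Finset.image sig1 ({1, 2, 3} : Finset (Fin 4)) = {0, 2, 3} := by decide
lemma img2_0 : Finset.image sig2 ({0, 1, 2, 3} : Finset (Fin 4)) = {0, 1, 2, 3} := by decide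
lemma img2_1 : Finset.image sig2 ({0} : Finset (Fin 4)) = {0} := by decide
lemma img2_2 : Finset.image sig2 ({1} : Finset (Fin 4)) = {1} := by decide
lemma img2_3 : Finset.image sig2 ({2} : Finset (Fin 4)) = {3} := by decide
lemma img2_4 : Finset.image sig2 ({3} : Finset (Fin 4)) = {2} := by decide
lemma img2_5 : Finset.image sig2 ({0, 1} : Finset (Fin 4)) = {0, 1} := by decide
lemma img2_6 : Finset.image sig2 ({2, 3} : Finset (Fin 4)) = {2, 3} := by decide
lemma img2_7 : Finset.image sig2 ({0, 2} : Finset (Fin 4)) = {0, 3} := by decide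
lemma img2_8 : Finset.image sig2 ({1, 2} : Finset (Fin 4)) = {1, 3} := by decide
lemma img2_9 : Finset.image sig2 ({0, 3} : Finset (Fin 4)) = {0, 2} := by decide
lemma img2_10 : Finset.image sig2 ({1, 3} : Finset (Fin 4)) = {1, 2} := by decide
lemma img2_11 : Finset.image sig2 ({0, 1, 2} : Finset (Fin 4)) = {0, 1, 3} := by decide
lemma img2_12 : Finset.image sig2 ({0, 1, 3} : Finset (Fin 4)) = {0, 1, 2} := by decide
lemma img2_13 : Finset.image sig2 ({0, 2, 3} : Finset (Fin 4)) = {0, 2, 3} := by decide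
lemma img2_14 : Finset.image sig2 ({1, 2, 3} : Finset (Fin 4)) = {1, 2, 3} := by decide
lemma img3_0 : Finset.image sig3 ({0, 1, 2, 3} : Finset (Fin 4)) = {0, 1, 2, 3} := by decide
lemma img3_1 : Finset.image sig3 ({0} : Finset (Fin 4)) = {1} := by decide
lemma img3_2 : Finset.image sig3 ({1} : Finset (Fin 4)) = {0} := by decide
lemma img3_3 : Finset.image sig3 ({2} : Finset (Fin 4)) = {3} := by decide
lemma img3_4 : Finset.image sig3 ({3} : Finset (Fin 4)) = {2} := by decide
lemma img3_5 : Finset.image sig3 ({0, 1} : Finset (Fin 4)) = {0, 1} := by decide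
lemma img3_6 : Finset.image sig3 ({2, 3} : Finset (Fin 4)) = {2, 3} := by decide
lemma img3_7 : Finset.image sig3 ({0, 2} : Finset (Fin 4)) = {1, 3} := by decide
lemma img3_8 : Finset.image sig3 ({1, 2} : Finset (Fin 4)) = {0, 3} := by decide
lemma img3_9 : Finset.image sig3 ({0, 3} : Finset (Fin 4)) = {1, 2} := by decide
lemma img3_10 : Finset.image sig3 ({1, 3} : Finset (Fin 4)) = {0, 2} := by decide
lemma img3_11 : Finset.image sig3 ({0, 1, 2} : Finset (Fin 4)) = {0, 1, 3} := by decide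
lemma img3_12 : Finset.image sig3 ({0, 1, 3} : Finset (Fin 4)) = {0, 1, 2} := by decide
lemma img3_13 : Finset.image sig3 ({0, 2, 3} : Finset (Fin 4)) = {1, 2, 3} := by decide
lemma img3_14 : Finset.image sig3 ({1, 2, 3} : Finset (Fin 4)) = {0, 2, 3} := by decide

def SetB : Set (EIndex 4 → ℝ) := { x : EIndex 4 → ℝ |
        x ∈ closure { y : EIndex 4 → ℝ | IsEntropic y } ∧
        x ⟨{0, 1, 2, 3}, by decide⟩ = 1 ∧
        x ⟨{0}, by decide⟩ = x ⟨{1}, by decide⟩ ∧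
        x ⟨{0, 2}, by decide⟩ = x ⟨{1, 2}, by decide⟩ ∧
        x ⟨{0, 3}, by decide⟩ = x ⟨{1, 3}, by decide⟩ ∧
        x ⟨{0, 2, 3}, by decide⟩ = x ⟨{1, 2, 3}, by decide⟩ ∧
        x ⟨{2}, by decide⟩ = x ⟨{3}, by decide⟩ ∧
        x ⟨{0, 2}, by decide⟩ = x ⟨{0, 3}, by decide⟩ ∧
        x ⟨{1, 2}, by decide⟩ = x ⟨{1, 3}, by decide⟩ ∧
        x ⟨{0, 1, 2}, by decide⟩ = x ⟨{0, 1, 3}, by decide⟩ }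

lemma symmetrize (x : EIndex 4 → ℝ) (hx : x ∈ closure { y : EIndex 4 → ℝ | IsEntropic y })
    (hx1 : x ⟨{0, 1, 2, 3}, by decide⟩ = 1) (N : ℕ) :
    ∃ (w : EIndex 4 → ℝ) (lam : ℝ), w ∈ SetB ∧ 0 < lam ∧ lam ≤ 1/((N:ℝ)+1) ∧ lam ≤ 1/16 ∧
      Ing4 w = (1 - (Real.negMulLog lam + Real.negMulLog (1 - lam))) * Ing4 x := by
  have hcN : (2:ℝ) ≤ 4*(((N+3:ℕ):ℝ)+1) := by push_cast; nlinarith [Nat.cast_nonneg (α := ℝ) N]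
  obtain ⟨lam, hl0, hl1, hleq⟩ := exists_lam hcN
  have hK0 : (0:ℝ) < 4*(((N+3:ℕ):ℝ)+1) := by push_cast; nlinarith [Nat.cast_nonneg (α := ℝ) N]
  have hl16 : lam ≤ 1/16 := le_trans hl1 (by
    rw [div_le_div_iff₀ hK0 (by norm_num)]
    push_cast; nlinarith [Nat.cast_nonneg (α := ℝ) N])
  have hlN : lam ≤ 1/((N:ℝ)+1) := le_trans hl1 (by
    rw [div_le_div_iff₀ hK0 (by positivity)]
    push_cast; nlinarith [Nat.cast_nonneg (α := ℝ) N])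
  have hmem : (fun V : EIndex 4 => lam * ((((N+3:ℕ):ℝ)+1) *
        (x V + x ⟨V.1.image sig1, V.2.image sig1⟩ + x ⟨V.1.image sig2, V.2.image sig2⟩
          + x ⟨V.1.image sig3, V.2.image sig3⟩))
      + (Real.negMulLog lam + Real.negMulLog (1 - lam)))
      ∈ closure { y : EIndex 4 → ℝ | IsEntropic y } := by
    apply mem_cl_erasure lam hl0.le (by linarith)
    apply mem_cl_mul
    exact mem_cl_add (mem_cl_add (mem_cl_add hx (mem_cl_perm sig1 hx)) (mem_cl_perm sig2 hx))
      (mem_cl_perm sig3 hx)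
  refine ⟨_, lam, ⟨hmem, ?_, ?_, ?_, ?_, ?_, ?_, ?_, ?_, ?_⟩, hl0, hlN, hl16, ?_⟩
  · show lam * _ + _ = 1
    simp only [img1_0, img1_1, img1_2, img1_3, img1_4, img1_5, img1_6, img1_7, img1_8, img1_9, img1_10, img1_11, img1_12, img1_13, img1_14, img2_0, img2_1, img2_2, img2_3, img2_4, img2_5, img2_6, img2_7, img2_8, img2_9, img2_10, img2_11, img2_12, img2_13, img2_14, img3_0, img3_1, img3_2, img3_3, img3_4, img3_5, img3_6, img3_7, img3_8, img3_9, img3_10, img3_11, img3_12, img3_13, img3_14]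
    rw [hx1]
    push_cast at hleq ⊢
    linarith
  · show lam * _ + _ = lam * _ + _
    simp only [img1_0, img1_1, img1_2, img1_3, img1_4, img1_5, img1_6, img1_7, img1_8, img1_9, img1_10, img1_11, img1_12, img1_13, img1_14, img2_0, img2_1, img2_2, img2_3, img2_4, img2_5, img2_6, img2_7, img2_8, img2_9, img2_10, img2_11, img2_12, img2_13, img2_14, img3_0, img3_1, img3_2, img3_3, img3_4, img3_5, img3_6, img3_7, img3_8, img3_9, img3_10, img3_11, img3_12, img3_13, img3_14]
    ring
  · show lam * _ + _ = lam * _ + _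
    simp only [img1_0, img1_1, img1_2, img1_3, img1_4, img1_5, img1_6, img1_7, img1_8, img1_9, img1_10, img1_11, img1_12, img1_13, img1_14, img2_0, img2_1, img2_2, img2_3, img2_4, img2_5, img2_6, img2_7, img2_8, img2_9, img2_10, img2_11, img2_12, img2_13, img2_14, img3_0, img3_1, img3_2, img3_3, img3_4, img3_5, img3_6, img3_7, img3_8, img3_9, img3_10, img3_11, img3_12, img3_13, img3_14]
    ring
  · show lam * _ + _ = lam * _ + _
    simp only [img1_0, img1_1, img1_2, img1_3, img1_4, img1_5, img1_6, img1_7, img1_8, img1_9, img1_10, img1_11, img1_12, img1_13, img1_14, img2_0, img2_1, img2_2, img2_3, img2_4, img2_5, img2_6, img2_7, img2_8, img2_9, img2_10, img2_11, img2_12, img2_13, img2_14, img3_0, img3_1, img3_2, img3_3, img3_4, img3_5, img3_6, img3_7, img3_8, img3_9, img3_10, img3_11, img3_12, img3_13, img3_14]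
    ring
  · show lam * _ + _ = lam * _ + _
    simp only [img1_0, img1_1, img1_2, img1_3, img1_4, img1_5, img1_6, img1_7, img1_8, img1_9, img1_10, img1_11, img1_12, img1_13, img1_14, img2_0, img2_1, img2_2, img2_3, img2_4, img2_5, img2_6, img2_7, img2_8, img2_9, img2_10, img2_11, img2_12, img2_13, img2_14, img3_0, img3_1, img3_2, img3_3, img3_4, img3_5, img3_6, img3_7, img3_8, img3_9, img3_10, img3_11, img3_12, img3_13, img3_14]
    ring
  · show lam * _ + _ = lam * _ + _
    simp only [img1_0, img1_1, img1_2, img1_3, img1_4, img1_5, img1_6, img1_7, img1_8, img1_9, img1_10, img1_11, img1_12, img1_13, img1_14, img2_0, img2_1, img2_2, img2_3, img2_4, img2_5, img2_6, img2_7, img2_8, img2_9, img2_10, img2_11, img2_12, img2_13, img2_14, img3_0, img3_1, img3_2, img3_3, img3_4, img3_5, img3_6, img3_7, img3_8, img3_9, img3_10, img3_11, img3_12, img3_13, img3_14]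
    ring
  · show lam * _ + _ = lam * _ + _
    simp only [img1_0, img1_1, img1_2, img1_3, img1_4, img1_5, img1_6, img1_7, img1_8, img1_9, img1_10, img1_11, img1_12, img1_13, img1_14, img2_0, img2_1, img2_2, img2_3, img2_4, img2_5, img2_6, img2_7, img2_8, img2_9, img2_10, img2_11, img2_12, img2_13, img2_14, img3_0, img3_1, img3_2, img3_3, img3_4, img3_5, img3_6, img3_7, img3_8, img3_9, img3_10, img3_11, img3_12, img3_13, img3_14]
    ring
  · show lam * _ + _ = lam * _ + _
    simp only [img1_0, img1_1, img1_2, img1_3, img1_4, img1_5, img1_6, img1_7, img1_8, img1_9, img1_10, img1_11, img1_12, img1_13, img1_14, img2_0, img2_1, img2_2, img2_3, img2_4, img2_5, img2_6, img2_7, img2_8, img2_9, img2_10, img2_11, img2_12, img2_13, img2_14, img3_0, img3_1, img3_2, img3_3, img3_4, img3_5, img3_6, img3_7, img3_8, img3_9, img3_10, img3_11, img3_12, img3_13, img3_14]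
    ring
  · show lam * _ + _ = lam * _ + _
    simp only [img1_0, img1_1, img1_2, img1_3, img1_4, img1_5, img1_6, img1_7, img1_8, img1_9, img1_10, img1_11, img1_12, img1_13, img1_14, img2_0, img2_1, img2_2, img2_3, img2_4, img2_5, img2_6, img2_7, img2_8, img2_9, img2_10, img2_11, img2_12, img2_13, img2_14, img3_0, img3_1, img3_2, img3_3, img3_4, img3_5, img3_6, img3_7, img3_8, img3_9, img3_10, img3_11, img3_12, img3_13, img3_14]
    ring
  · show Ing4 _ = _
    have ht : 1 - (Real.negMulLog lam + Real.negMulLog (1 - lam)) = 4*(((N+3:ℕ):ℝ)+1) * lam := by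
      linarith
    rw [ht]
    unfold Ing4
    simp only [img1_0, img1_1, img1_2, img1_3, img1_4, img1_5, img1_6, img1_7, img1_8, img1_9, img1_10, img1_11, img1_12, img1_13, img1_14, img2_0, img2_1, img2_2, img2_3, img2_4, img2_5, img2_6, img2_7, img2_8, img2_9, img2_10, img2_11, img2_12, img2_13, img2_14, img3_0, img3_1, img3_2, img3_3, img3_4, img3_5, img3_6, img3_7, img3_8, img3_9, img3_10, img3_11, img3_12, img3_13, img3_14]
    ring

lemma one_mem_cl : (fun _ : EIndex 4 => (1:ℝ)) ∈ closure { y : EIndex 4 → ℝ | IsEntropic y } := by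
  have z0 : (fun _ : EIndex 4 => (0:ℝ)) ∈ closure { y : EIndex 4 → ℝ | IsEntropic y } :=
    subset_closure isEntropic_zero
  have hlog2 : (fun _ : EIndex 4 => Real.log 2) ∈ closure { y : EIndex 4 → ℝ | IsEntropic y } := by
    have h := mem_cl_erasure (1/2) (by norm_num) (by norm_num) z0
    have heq : (fun V : EIndex 4 => (1:ℝ)/2 * (fun _ : EIndex 4 => (0:ℝ)) V
        + (Real.negMulLog (1/2) + Real.negMulLog (1 - 1/2))) = fun _ : EIndex 4 => Real.log 2 := by
      funext V
      norm_num [Real.negMulLog_def, Real.log_inv]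
      rw [show (1:ℝ)/2 = 2⁻¹ by norm_num, Real.log_inv]
      ring
    exact heq ▸ h
  have h3 := mem_cl_mul 2 hlog2
  have hc : (2:ℝ) ≤ (((2:ℕ):ℝ)+1) * Real.log 2 := by
    have := Real.log_two_gt_d9
    push_cast
    nlinarith
  obtain ⟨mu, hm0, hm1, hmeq⟩ := exists_lam hc
  have h1le : mu ≤ 1 := by
    refine le_trans hm1 ?_
    rw [div_le_one (by linarith)]
    linarith
  have hfin := mem_cl_erasure mu hm0.le h1le h3
  have heq : (fun V : EIndex 4 => mu * ((fun V : EIndex 4 => (((2:ℕ):ℝ)+1)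
        * (fun _ : EIndex 4 => Real.log 2) V) V)
      + (Real.negMulLog mu + Real.negMulLog (1 - mu))) = fun _ : EIndex 4 => (1:ℝ) := by
    funext V
    have : (((2:ℕ):ℝ)+1) * Real.log 2 * mu + (Real.negMulLog mu + Real.negMulLog (1 - mu)) = 1 :=
      hmeq
    simp only
    linarith [this]
  exact heq ▸ hfin

lemma one_mem_SetB : (fun _ : EIndex 4 => (1:ℝ)) ∈ SetB :=
  ⟨one_mem_cl, rfl, rfl, rfl, rfl, rfl, rfl, rfl, rfl, rfl⟩

def SetA : Set (EIndex 4 → ℝ) := { x : EIndex 4 → ℝ |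
    x ∈ closure { y : EIndex 4 → ℝ | IsEntropic y } ∧
    x ⟨{0, 1, 2, 3}, by decide⟩ = 1 }

theorem main_thm : sInf (Ing4 '' SetA) = sInf (Ing4 '' SetB) := by
  have hBA : SetB ⊆ SetA := fun x hx => ⟨hx.1, hx.2.1⟩
  have h1B : (fun _ : EIndex 4 => (1:ℝ)) ∈ SetB := one_mem_SetB
  have hS2ne : (Ing4 '' SetB).Nonempty := ⟨Ing4 _, Set.mem_image_of_mem _ h1B⟩
  have hS1ne : (Ing4 '' SetA).Nonempty := ⟨Ing4 _, Set.mem_image_of_mem _ (hBA h1B)⟩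
  by_cases hbdd : BddBelow (Ing4 '' SetA)
  · have hbdd2 : BddBelow (Ing4 '' SetB) := hbdd.mono (Set.image_mono hBA)
    apply le_antisymm
    · exact csInf_le_csInf hbdd hS2ne (Set.image_mono hBA)
    · apply le_csInf hS1ne
      rintro a ⟨x, ⟨hxc, hx1⟩, rfl⟩
      choose w lam hw hl0 hlN hl16 hIng using fun N => symmetrize x hxc hx1 N
      have hlam0 : Filter.Tendsto lam Filter.atTop (nhds 0) :=
        squeeze_zero (fun n => (hl0 n).le) hlN tendsto_one_div_add_atTop_nhds_zero_nat
      have hml : Filter.Tendsto (fun n => Real.negMulLog (lam n)) Filter.atTop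
          (nhds (Real.negMulLog 0)) := (Real.continuous_negMulLog.tendsto 0).comp hlam0
      have hml2 : Filter.Tendsto (fun n => Real.negMulLog (1 - lam n)) Filter.atTop
          (nhds (Real.negMulLog (1 - 0))) :=
        (Real.continuous_negMulLog.tendsto _).comp (tendsto_const_nhds.sub hlam0)
      have hv : Filter.Tendsto
          (fun n => (1 - (Real.negMulLog (lam n) + Real.negMulLog (1 - lam n))) * Ing4 x)
          Filter.atTop
          (nhds ((1 - (Real.negMulLog 0 + Real.negMulLog (1 - 0))) * Ing4 x)) :=
        (tendsto_const_nhds.sub (hml.add hml2)).mul_const _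
      have hval : (1 - (Real.negMulLog 0 + Real.negMulLog (1 - 0))) * Ing4 x = Ing4 x := by
        norm_num
      rw [hval] at hv
      refine ge_of_tendsto hv (Filter.Eventually.of_forall fun n => ?_)
      exact csInf_le hbdd2 ⟨w n, hw n, hIng n⟩
  · have hnb2 : ¬ BddBelow (Ing4 '' SetB) := by
      rintro ⟨b, hb⟩
      apply hbdd
      refine ⟨min 0 ((16/7) * b), ?_⟩
      rintro a ⟨x, ⟨hxc, hx1⟩, rfl⟩
      obtain ⟨w, lam, hw, hl0, hlN, hl16, hIng⟩ := symmetrize x hxc hx1 0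
      have hbw : b ≤ (1 - (Real.negMulLog lam + Real.negMulLog (1 - lam))) * Ing4 x :=
        hIng ▸ hb (Set.mem_image_of_mem _ hw)
      have hh2 := h2_le hl0 hl16
      have hnn1 : 0 ≤ Real.negMulLog lam := Real.negMulLog_nonneg hl0.le (by linarith)
      have hnn2 : 0 ≤ Real.negMulLog (1 - lam) :=
        Real.negMulLog_nonneg (by linarith) (by linarith)
      rcases le_or_gt 0 (Ing4 x) with h | h
      · exact le_trans (min_le_left _ _) h
      · refine le_trans (min_le_right _ _) ?_
        nlinarith [hbw, hh2, hnn1, hnn2, h]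
    rw [Real.sInf_of_not_bddBelow hbdd, Real.sInf_of_not_bddBelow hnb2]

/-- The infimum of the linear functional `Ing` over the almost entropic points with
`x_{ABCD} = 1` equals the infimum of `Ing` over the almost entropic points satisfying in
addition the eight symmetry equalities
`x_A = x_B`, `x_{AC} = x_{BC}`, `x_{AD} = x_{BD}`, `x_{ACD} = x_{BCD}`,
`x_C = x_D`, `x_{AC} = x_{AD}`, `x_{BC} = x_{BD}`, `x_{ABC} = x_{ABD}`
(indices `A, B, C, D` are `0, 1, 2, 3 : Fin 4`). -/
theorem ingleton_inf_eq_inf_over_symmetric_points :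
    sInf (Ing4 '' { x : EIndex 4 → ℝ |
        x ∈ closure { y : EIndex 4 → ℝ | IsEntropic y } ∧
        x ⟨{0, 1, 2, 3}, by decide⟩ = 1 })
      =
    sInf (Ing4 '' { x : EIndex 4 → ℝ |
        x ∈ closure { y : EIndex 4 → ℝ | IsEntropic y } ∧
        x ⟨{0, 1, 2, 3}, by decide⟩ = 1 ∧
        x ⟨{0}, by decide⟩ = x ⟨{1}, by decide⟩ ∧
        x ⟨{0, 2}, by decide⟩ = x ⟨{1, 2}, by decide⟩ ∧
        x ⟨{0, 3}, by decide⟩ = x ⟨{1, 3}, by decide⟩ ∧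
        x ⟨{0, 2, 3}, by decide⟩ = x ⟨{1, 2, 3}, by decide⟩ ∧
        x ⟨{2}, by decide⟩ = x ⟨{3}, by decide⟩ ∧
        x ⟨{0, 2}, by decide⟩ = x ⟨{0, 3}, by decide⟩ ∧
        x ⟨{1, 2}, by decide⟩ = x ⟨{1, 3}, by decide⟩ ∧
        x ⟨{0, 1, 2}, by decide⟩ = x ⟨{0, 1, 3}, by decide⟩ }) := by
  exact main_thm
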